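/- The function H(c) = ∫₀^∞ du/(c e^u − u) is strictly decreasing on (1/e, ∞), with H(c) → +∞ as c → (1/e)+ and H(c) → 0 as c → +∞. -/

import Mathlib

open MeasureTheory Real Filter Set


-- basic denominator bound
lemma denom_lb (c u : ℝ) : (c - (Real.exp 1)⁻¹) * Real.exp u ≤ c * Real.exp u - u := by
  have h1 : u ≤ Real.exp (u - 1) := by linarith [Real.add_one_le_exp (u - 1)]
  have h2 : u * Real.exp 1 ≤ Real.exp u := by
    calc u * Real.exp 1 ≤ Real.exp (u - 1) * Real.exp 1 :=
          mul_le_mul_of_nonneg_right h1 (Real.exp_pos 1).le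
      _ = Real.exp u := by rw [← Real.exp_add]; ring_nf
  have he := Real.exp_pos 1
  have h3 : u ≤ (Real.exp 1)⁻¹ * Real.exp u := by
    rw [inv_mul_eq_div, le_div_iff₀ he]; exact h2
  nlinarith [Real.exp_pos u]

lemma denom_pos {c : ℝ} (hc : (Real.exp 1)⁻¹ < c) (u : ℝ) : 0 < c * Real.exp u - u :=
  lt_of_lt_of_le (mul_pos (sub_pos.2 hc) (Real.exp_pos u)) (denom_lb c u)

lemma f_cont {c : ℝ} (hc : (Real.exp 1)⁻¹ < c) :
    Continuous (fun u : ℝ => (c * Real.exp u - u)⁻¹) := by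
  refine Continuous.inv₀ (by continuity) fun u => (denom_pos hc u).ne'

lemma f_le {c : ℝ} (hc : (Real.exp 1)⁻¹ < c) (u : ℝ) :
    (c * Real.exp u - u)⁻¹ ≤ (c - (Real.exp 1)⁻¹)⁻¹ * Real.exp (-u) := by
  rw [Real.exp_neg, ← mul_inv]
  exact inv_anti₀ (mul_pos (sub_pos.2 hc) (Real.exp_pos u)) (denom_lb c u)

lemma maj_int {c : ℝ} :
    IntegrableOn (fun u : ℝ => (c - (Real.exp 1)⁻¹)⁻¹ * Real.exp (-u)) (Set.Ioi 0) := by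
  have h : IntegrableOn (fun u : ℝ => Real.exp (-u)) (Set.Ioi 0) := by
    have h0 := exp_neg_integrableOn_Ioi 0 one_pos
    simp only [neg_mul, one_mul] at h0
    exact h0
  exact h.const_mul _

lemma f_int {c : ℝ} (hc : (Real.exp 1)⁻¹ < c) :
    IntegrableOn (fun u : ℝ => (c * Real.exp u - u)⁻¹) (Set.Ioi 0) := by
  refine Integrable.mono' (maj_int (c := c)) ((f_cont hc).aestronglyMeasurable.restrict) ?_
  refine Filter.Eventually.of_forall fun u => ?_
  rw [Real.norm_eq_abs, abs_of_nonneg (inv_nonneg.2 (denom_pos hc u).le)]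
  exact f_le hc u

lemma H_nonneg {c : ℝ} (hc : (Real.exp 1)⁻¹ < c) :
    0 ≤ ∫ u in Set.Ioi (0:ℝ), (c * Real.exp u - u)⁻¹ :=
  setIntegral_nonneg measurableSet_Ioi fun u _ => inv_nonneg.2 (denom_pos hc u).le

lemma H_le {c : ℝ} (hc : (Real.exp 1)⁻¹ < c) :
    (∫ u in Set.Ioi (0:ℝ), (c * Real.exp u - u)⁻¹) ≤ (c - (Real.exp 1)⁻¹)⁻¹ := by
  have h1 : (∫ u in Set.Ioi (0:ℝ), (c * Real.exp u - u)⁻¹)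
      ≤ ∫ u in Set.Ioi (0:ℝ), (c - (Real.exp 1)⁻¹)⁻¹ * Real.exp (-u) :=
    setIntegral_mono_on (f_int hc) maj_int measurableSet_Ioi fun u _ => f_le hc u
  rw [integral_const_mul, integral_exp_neg_Ioi_zero, mul_one] at h1
  exact h1

lemma H_strict_anti : StrictAntiOn (fun c : ℝ => ∫ u in Set.Ioi (0:ℝ), (c * Real.exp u - u)⁻¹)
    (Set.Ioi (Real.exp 1)⁻¹) := by
  intro c1 h1 c2 h2 hlt
  simp only [Set.mem_Ioi] at h1 h2
  have key : 0 < ∫ u in Set.Ioi (0:ℝ), ((c1 * Real.exp u - u)⁻¹ - (c2 * Real.exp u - u)⁻¹) := by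
    have hpos : ∀ u : ℝ, 0 < (c1 * Real.exp u - u)⁻¹ - (c2 * Real.exp u - u)⁻¹ := by
      intro u
      have hd1 := denom_pos h1 u
      have hd2 := denom_pos h2 u
      have : c1 * Real.exp u - u < c2 * Real.exp u - u := by
        have := Real.exp_pos u; nlinarith
      have := inv_strictAnti₀ hd1 this
      linarith
    rw [setIntegral_pos_iff_support_of_nonneg_ae
      (Filter.Eventually.of_forall fun u => (hpos u).le) ((f_int h1).sub (f_int h2))]
    have hsub : Set.Ioi (0:ℝ) ⊆ Function.support
        (fun u => (c1 * Real.exp u - u)⁻¹ - (c2 * Real.exp u - u)⁻¹) ∩ Set.Ioi 0 :=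
      fun u hu => ⟨(hpos u).ne', hu⟩
    calc (0:ENNReal) < volume (Set.Ioi (0:ℝ)) := by simp [Real.volume_Ioi]
      _ ≤ _ := measure_mono hsub
  rw [integral_sub (f_int h1) (f_int h2)] at key
  simpa using key

lemma H_blowup : Tendsto (fun c : ℝ => ∫ u in Set.Ioi (0:ℝ), (c * Real.exp u - u)⁻¹)
    (nhdsWithin (Real.exp 1)⁻¹ (Set.Ioi (Real.exp 1)⁻¹)) atTop := by
  rw [tendsto_atTop]
  intro K
  set K' := max K 1 with hK'
  have hK'pos : (0:ℝ) < K' := lt_of_lt_of_le one_pos (le_max_right _ _)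
  have hK'1 : (1:ℝ) ≤ K' := le_max_right _ _
  have hepos := Real.exp_pos 1
  set δ := ((2 * Real.exp 1 * K')⁻¹) ^ 2 with hδdef
  have hδpos : 0 < δ := by positivity
  filter_upwards [Ioo_mem_nhdsGT (lt_add_of_pos_right (Real.exp 1)⁻¹ hδpos)] with c hc
  obtain ⟨hc1, hc2⟩ := hc
  have hεpos : 0 < c - (Real.exp 1)⁻¹ := sub_pos.2 hc1
  have hεδ : c - (Real.exp 1)⁻¹ < δ := by linarith
  set ε := c - (Real.exp 1)⁻¹ with hεdef
  set s := Real.sqrt ε with hsdef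
  have hspos : 0 < s := Real.sqrt_pos.2 hεpos
  have hs2 : s ^ 2 = ε := Real.sq_sqrt hεpos.le
  have hsle : s ≤ (2 * Real.exp 1 * K')⁻¹ := by
    calc s ≤ Real.sqrt δ := Real.sqrt_le_sqrt hεδ.le
      _ = (2 * Real.exp 1 * K')⁻¹ := Real.sqrt_sq (by positivity)
  set a := Real.exp 1 * s with hadef
  have hapos : 0 < a := by positivity
  have ha1 : a ≤ 1 := by
    have h1 : a ≤ Real.exp 1 * (2 * Real.exp 1 * K')⁻¹ :=
      mul_le_mul_of_nonneg_left hsle hepos.le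
    have h2 : Real.exp 1 * (2 * Real.exp 1 * K')⁻¹ = (2 * K')⁻¹ := by
      field_simp
    have h3 : (2 * K')⁻¹ ≤ 1 := by
      rw [inv_le_one_iff₀]; right; linarith
    linarith
  -- pointwise upper bound on the denominator on Ioc 1 (1+a)
  have hub : ∀ u ∈ Set.Ioc (1:ℝ) (1 + a), c * Real.exp u - u ≤ 2 * (Real.exp 1) ^ 2 * ε := by
    intro u hu
    have hu1 : 1 < u := hu.1
    have hu2 : u ≤ 2 := by linarith [hu.2]
    have hexp2 : Real.exp u ≤ (Real.exp 1) ^ 2 := by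
      have : Real.exp u ≤ Real.exp 2 := Real.exp_le_exp.2 hu2
      have h2 : Real.exp 2 = (Real.exp 1) ^ 2 := by
        rw [show (2:ℝ) = 1 + 1 by norm_num, Real.exp_add]; ring
      linarith
    have habs : |u - 1| ≤ 1 := by rw [abs_le]; constructor <;> linarith
    have hq := Real.abs_exp_sub_one_sub_id_le habs
    have h1 : Real.exp (u - 1) - u ≤ (u - 1) ^ 2 := by
      have := (abs_le.1 hq).2; linarith
    have h2 : (u - 1) ^ 2 ≤ a ^ 2 := by nlinarith [hu.1.le, hu.2]
    have ha2 : a ^ 2 = (Real.exp 1) ^ 2 * ε := by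
      rw [hadef, mul_pow, hs2]
    have hei : (Real.exp 1)⁻¹ * Real.exp u = Real.exp (u - 1) := by
      rw [← Real.exp_neg, ← Real.exp_add]; ring_nf
    have hceps : c = ε + (Real.exp 1)⁻¹ := by rw [hεdef]; ring
    have expand : c * Real.exp u - u
        = ε * Real.exp u + (Real.exp (u - 1) - u) := by
      rw [hceps, ← hei]; ring
    rw [expand]
    have hεe : ε * Real.exp u ≤ ε * (Real.exp 1) ^ 2 :=
      mul_le_mul_of_nonneg_left hexp2 hεpos.le
    nlinarith
  have hsub : Set.Ioc (1:ℝ) (1 + a) ⊆ Set.Ioi 0 := fun u hu => lt_trans one_pos hu.1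
  -- lower-bound the integral over Ioc by a constant integral
  have step2 : (2 * (Real.exp 1) ^ 2 * ε)⁻¹ * a
      ≤ ∫ u in Set.Ioc (1:ℝ) (1 + a), (c * Real.exp u - u)⁻¹ := by
    have hconst : (∫ _u in Set.Ioc (1:ℝ) (1 + a), (2 * (Real.exp 1) ^ 2 * ε)⁻¹)
        = (2 * (Real.exp 1) ^ 2 * ε)⁻¹ * a := by
      rw [setIntegral_const, Measure.real, Real.volume_Ioc, smul_eq_mul]
      rw [show (1 + a - 1 : ℝ) = a by ring, ENNReal.toReal_ofReal hapos.le]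
      ring
    rw [← hconst]
    refine setIntegral_mono_on (integrableOn_const ?_)
      ((f_int hc1).mono_set hsub) measurableSet_Ioc fun u hu => ?_
    · rw [Real.volume_Ioc]; exact ENNReal.ofReal_ne_top
    · exact inv_anti₀ (denom_pos hc1 u) (hub u hu)
  have step1 : (∫ u in Set.Ioc (1:ℝ) (1 + a), (c * Real.exp u - u)⁻¹)
      ≤ ∫ u in Set.Ioi (0:ℝ), (c * Real.exp u - u)⁻¹ :=
    setIntegral_mono_set (f_int hc1)
      (Filter.Eventually.of_forall fun u => inv_nonneg.2 (denom_pos hc1 u).le)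
      (HasSubset.Subset.eventuallyLE hsub)
  -- final arithmetic
  have harith : (2 * (Real.exp 1) ^ 2 * ε)⁻¹ * a = (2 * Real.exp 1 * s)⁻¹ := by
    have he2 : Real.exp 2 = Real.exp 1 ^ 2 := by
      rw [show (2:ℝ) = 1 + 1 by norm_num, Real.exp_add]; ring
    rw [hadef, ← hs2]; field_simp
  have hfin : K' ≤ (2 * Real.exp 1 * s)⁻¹ := by
    have h1 : 2 * Real.exp 1 * s ≤ 2 * Real.exp 1 * (2 * Real.exp 1 * K')⁻¹ := by
      nlinarith
    have h2 : 2 * Real.exp 1 * (2 * Real.exp 1 * K')⁻¹ = K'⁻¹ := by field_simp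
    have h3 : 2 * Real.exp 1 * s ≤ K'⁻¹ := by linarith
    calc K' = (K'⁻¹)⁻¹ := (inv_inv K').symm
      _ ≤ (2 * Real.exp 1 * s)⁻¹ := inv_anti₀ (by positivity) h3
  have : K ≤ K' := le_max_left _ _
  linarith

lemma H_zero : Tendsto (fun c : ℝ => ∫ u in Set.Ioi (0:ℝ), (c * Real.exp u - u)⁻¹)
    atTop (nhds 0) := by
  have hub : Tendsto (fun c : ℝ => (c - (Real.exp 1)⁻¹)⁻¹) atTop (nhds 0) :=
    tendsto_inv_atTop_zero.comp (tendsto_atTop_add_const_right _ _ tendsto_id)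
  refine tendsto_of_tendsto_of_tendsto_of_le_of_le'
    (tendsto_const_nhds : Tendsto (fun _ : ℝ => (0:ℝ)) atTop (nhds 0)) hub ?_ ?_
  · filter_upwards [eventually_gt_atTop (Real.exp 1)⁻¹] with c hc using H_nonneg hc
  · filter_upwards [eventually_gt_atTop (Real.exp 1)⁻¹] with c hc using H_le hc

/-- `H(c) = ∫₀^∞ du/(c e^u − u)` is strictly decreasing on `(1/e, ∞)`, with
`H(c) → +∞` as `c → (1/e)+` and `H(c) → 0` as `c → +∞`. -/
theorem H_right_branch :
    StrictAntiOn (fun c : ℝ => ∫ u in Set.Ioi (0:ℝ), (c * Real.exp u - u)⁻¹)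
      (Set.Ioi (Real.exp 1)⁻¹) ∧
    Tendsto (fun c : ℝ => ∫ u in Set.Ioi (0:ℝ), (c * Real.exp u - u)⁻¹)
      (nhdsWithin (Real.exp 1)⁻¹ (Set.Ioi (Real.exp 1)⁻¹)) atTop ∧
    Tendsto (fun c : ℝ => ∫ u in Set.Ioi (0:ℝ), (c * Real.exp u - u)⁻¹)
      atTop (nhds 0) := ⟨H_strict_anti, H_blowup, H_zero⟩
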